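/- Let G be a directed graph with vertex set V and let v be a vertex such that there is no nonempty directed path from v to itself. Let U be the set of vertices strictly above v (those w with a nonempty directed path from v to w), and let G_v be the full subgraph of G on V ∖ U. Then the map sending a proper labelling of G_v to its extension assigning B to every vertex of U is an order isomorphism from the poset C(G_v) onto the subposet of C(G) consisting of proper labellings that assign B to every vertex of U. -/

import Mathlib

open CategoryTheory

/-- The three labels `A`, `B`, `C`. -/
inductive Label : Type
  | A | B | C
  deriving DecidableEq

/-- A labelling `ℓ` of the directed graph with vertex set `V` and edge relation `E`
is proper if for every edge `(v, w)`, either `ℓ v = A` or `ℓ w = B`. -/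
def IsProper {V : Type} (E : V → V → Prop) (ℓ : V → Label) : Prop :=
  ∀ v w, E v w → ℓ v = Label.A ∨ ℓ w = Label.B

/-- The proper labellings of the directed graph `(V, E)`. -/
def ProperLabelling (V : Type) (E : V → V → Prop) : Type :=
  { ℓ : V → Label // IsProper E ℓ }

/-- The poset `C(G)` of proper labellings: `ℓ ≤ ℓ'` iff at every vertex the labels agree,
or the label changes from `A` or `B` to `C`. -/
instance (V : Type) (E : V → V → Prop) : PartialOrder (ProperLabelling V E) where
  le ℓ ℓ' := ∀ v, ℓ.1 v = ℓ'.1 v ∨ (ℓ.1 v ≠ Label.C ∧ ℓ'.1 v = Label.C)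
  le_refl ℓ v := Or.inl rfl
  le_trans a b c hab hbc v := by
    rcases hab v with h | ⟨h1, h2⟩
    · rcases hbc v with h' | ⟨h1', h2'⟩
      · exact Or.inl (h.trans h')
      · exact Or.inr ⟨by rw [h]; exact h1', h2'⟩
    · rcases hbc v with h' | ⟨h1', h2'⟩
      · exact Or.inr ⟨h1, h'.symm.trans h2⟩
      · exact Or.inr ⟨h1, h2'⟩
  le_antisymm a b hab hba := by
    apply Subtype.ext
    funext v
    rcases hab v with h | ⟨h1, h2⟩
    · exact h
    · rcases hba v with h' | ⟨h1', h2'⟩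
      · exact h'.symm
      · exact absurd h2' h1

/-- Let `v` be a vertex of `G` with no nonempty directed path from `v` to itself, and let
`U` be the set of vertices strictly above `v` (reachable from `v` by a nonempty directed
path).  The map sending a proper labelling of the full subgraph `G_v` on `V ∖ U` to its
extension assigning `B` to every vertex of `U` is an order isomorphism from `C(G_v)` onto
the subposet of `C(G)` of proper labellings assigning `B` to every vertex of `U`.
The isomorphism is characterised by the fact that it preserves the labels of the vertices
not in `U` (on `U` the labels are forced to be `B`). -/
theorem extension_orderIso_of_acyclic_at_vertex
    (V : Type) (E : V → V → Prop) (v : V) (hv : ¬ Relation.TransGen E v v) :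
    ∃ e : ProperLabelling { w : V // ¬ Relation.TransGen E v w } (fun a b => E a.1 b.1) ≃o
        { ℓ : ProperLabelling V E // ∀ w, Relation.TransGen E v w → ℓ.1 w = Label.B },
      ∀ (ℓ : ProperLabelling { w : V // ¬ Relation.TransGen E v w } (fun a b => E a.1 b.1))
        (w : { w : V // ¬ Relation.TransGen E v w }),
        (e ℓ).1.1 w.1 = ℓ.1 w := by
  classical
  set U := fun w => Relation.TransGen E v w with hU
  have ext : ∀ (ℓ : ProperLabelling { w : V // ¬ U w } (fun a b => E a.1 b.1)),
      IsProper E (fun w => if h : U w then Label.B else ℓ.1 ⟨w, h⟩) := by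
    intro ℓ a b hab
    by_cases hb : U b
    · right; simp [hb]
    · by_cases ha : U a
      · exact absurd (ha.tail hab) hb
      · rcases ℓ.2 ⟨a, ha⟩ ⟨b, hb⟩ hab with h | h
        · left; simp [ha, h]
        · right; simp [hb, h]
  refine ⟨{
    toFun := fun ℓ => ⟨⟨fun w => if h : U w then Label.B else ℓ.1 ⟨w, h⟩, ext ℓ⟩,
      fun w hw => dif_pos hw⟩
    invFun := fun ℓ => ⟨fun w => ℓ.1.1 w.1, fun a b hab => ℓ.1.2 a.1 b.1 hab⟩
    left_inv := fun ℓ => by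
      apply Subtype.ext; funext w; exact dif_neg w.2
    right_inv := fun ℓ => by
      apply Subtype.ext; apply Subtype.ext; funext w
      dsimp only
      by_cases h : U w
      · rw [dif_pos h]; exact (ℓ.2 w h).symm
      · rw [dif_neg h]
    map_rel_iff' := by
      intro ℓ ℓ'
      constructor
      · intro h w
        have := h w.1
        change (if h : U w.1 then Label.B else ℓ.1 ⟨w.1, h⟩) = (if h : U w.1 then Label.B else ℓ'.1 ⟨w.1, h⟩) ∨ ((if h : U w.1 then Label.B else ℓ.1 ⟨w.1, h⟩) ≠ Label.C ∧ (if h : U w.1 then Label.B else ℓ'.1 ⟨w.1, h⟩) = Label.C) at this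
        simp only [dif_neg (show ¬ U w.1 from w.2)] at this
        exact this
      · intro h w
        change (if h : U w then Label.B else ℓ.1 ⟨w, h⟩) = (if h : U w then Label.B else ℓ'.1 ⟨w, h⟩) ∨ ((if h : U w then Label.B else ℓ.1 ⟨w, h⟩) ≠ Label.C ∧ (if h : U w then Label.B else ℓ'.1 ⟨w, h⟩) = Label.C)
        by_cases hw : U w
        · left; rw [dif_pos hw, dif_pos hw]
        · simp only [dif_neg hw]; exact h ⟨w, hw⟩ }, ?_⟩
  intro ℓ w
  exact dif_neg w.2
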